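/- In the 0-Hecke monoid of the affine Weyl group of type A_{n−1}^{(1)}, for 1 ≤ i < e ≤ n and any index j with e ≤ j < n or 0 ≤ j < i−1, the element T_j · C_{i,e} equals C_{i,e} · T_{j+1}, where C_{i,e} = T_{i−1} T_{i−2} ⋯ T_0 T_{n−1} ⋯ T_e (the cyclically decreasing product of length i + n − e). -/

import Mathlib

/-- The cyclically decreasing word of `C_{i,e}`: indices run from `i−1` down to `e`
cyclically modulo `n` (passing through `0` when `i ≤ e`). -/
def CWord (n : ℕ) (i e : ℕ) : List (ZMod n) :=
  (List.range (if e < i then i - e else i + n - e)).map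
    (fun t => (((i : ℤ) - 1 - (t : ℤ) : ℤ) : ZMod n))

/-- The 0-Hecke (Demazure) product `C_{i,e} = T_{i−1} T_{i−2} ⋯ T_e`. -/
def CProd {M : Type*} [Monoid M] (n : ℕ) (T : ZMod n → M) (i e : ℕ) : M :=
  ((CWord n i e).map T).prod

lemma zmod_cast_ne_one (n : ℕ) (d : ℤ) (h2 : 2 ≤ d) (hd : d ≤ (n : ℤ) - 2) :
    (d : ZMod n) ≠ 1 := by
  intro h
  have h0 : ((d - 1 : ℤ) : ZMod n) = 0 := by push_cast; rw [h]; ring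
  have h1 := (ZMod.intCast_zmod_eq_zero_iff_dvd _ _).mp h0
  have := Int.le_of_dvd (by omega) h1
  omega

lemma zmod_cast_ne_negone (n : ℕ) (d : ℤ) (h2 : 2 ≤ d) (hd : d ≤ (n : ℤ) - 2) :
    (d : ZMod n) ≠ -1 := by
  intro h
  have h0 : ((d + 1 : ℤ) : ZMod n) = 0 := by push_cast; rw [h]; ring
  have h1 := (ZMod.intCast_zmod_eq_zero_iff_dvd _ _).mp h0
  have := Int.le_of_dvd (by omega) h1
  omega

lemma comm_of_gap {M : Type*} [Monoid M] (n : ℕ) (T : ZMod n → M)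
    (hcomm : ∀ a b : ZMod n, a - b ≠ 1 → b - a ≠ 1 → T a * T b = T b * T a)
    (x y : ZMod n) (d : ℤ) (hxy : x - y = (d : ZMod n))
    (h2 : 2 ≤ d) (hd : d ≤ (n : ℤ) - 2) : T x * T y = T y * T x := by
  apply hcomm
  · rw [hxy]; exact zmod_cast_ne_one n d h2 hd
  · have h' : y - x = -((d : ℤ) : ZMod n) := by rw [← hxy]; ring
    rw [h']
    intro h
    exact zmod_cast_ne_negone n d h2 hd (neg_eq_iff_eq_neg.mp h)

lemma mul_prod_comm {M : Type*} [Monoid M] (x : M) (l : List M)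
    (h : ∀ a ∈ l, x * a = a * x) : x * l.prod = l.prod * x := by
  induction l with
  | nil => simp
  | cons a l ih =>
      simp only [List.prod_cons]
      rw [← mul_assoc, h a List.mem_cons_self, mul_assoc,
        ih (fun b hb => h b (List.mem_cons_of_mem _ hb)), ← mul_assoc]

lemma slide_aux {M : Type*} [Monoid M] (x y PA PB : M)
    (hA : x * PA = PA * x) (hB : y * PB = PB * y)
    (hbr : x * y * x = y * x * y) :
    x * (PA * (y * (x * PB))) = PA * (y * (x * PB)) * y := by
  have key : x * (y * (x * PB)) = y * (x * (PB * y)) := by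
    rw [← hB]
    calc x * (y * (x * PB)) = (x * y * x) * PB := by simp only [mul_assoc]
      _ = (y * x * y) * PB := by rw [hbr]
      _ = y * (x * (y * PB)) := by simp only [mul_assoc]
  calc x * (PA * (y * (x * PB))) = (x * PA) * (y * (x * PB)) := by rw [mul_assoc]
    _ = PA * (x * (y * (x * PB))) := by rw [hA, mul_assoc]
    _ = PA * (y * (x * (PB * y))) := by rw [key]
    _ = PA * (y * (x * PB)) * y := by simp only [mul_assoc]

theorem hecke_T_slide {M : Type*} [Monoid M] (n : ℕ) (hn : 3 ≤ n)
    (T : ZMod n → M)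
    (hidem : ∀ a : ZMod n, T a * T a = T a)
    (hcomm : ∀ a b : ZMod n, a - b ≠ 1 → b - a ≠ 1 → T a * T b = T b * T a)
    (hbraid : ∀ a : ZMod n, T a * T (a + 1) * T a = T (a + 1) * T a * T (a + 1))
    (i e : ℕ) (hi : 1 ≤ i) (hie : i < e) (hen : e ≤ n)
    (j : ℕ) (hj : (e ≤ j ∧ j < n) ∨ j < i - 1) :
    T ((j : ℕ) : ZMod n) * CProd n T i e
      = CProd n T i e * T ((j + 1 : ℕ) : ZMod n) := by
  set L := i + n - e with hL
  set f : ℕ → ZMod n := fun t => (((i : ℤ) - 1 - (t : ℤ) : ℤ) : ZMod n) with hf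
  -- choose the position p of letter j in the word
  obtain ⟨p, hp1, hp2, hpz⟩ :
      ∃ p : ℕ, 1 ≤ p ∧ p + 1 ≤ L ∧ f p = ((j : ℕ) : ZMod n) := by
    rcases hj with ⟨hej, hjn⟩ | hji
    · refine ⟨n + i - 1 - j, by omega, by omega, ?_⟩
      simp only [hf]
      have hpz' : ((n + i - 1 - j : ℕ) : ℤ) = (n : ℤ) + i - 1 - j := by omega
      rw [hpz']
      have h2 : ((i : ℤ) - 1 - ((n : ℤ) + i - 1 - j) : ℤ) = (j : ℤ) - n := by ring
      rw [h2]
      push_cast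
      simp [ZMod.natCast_self]
    · refine ⟨i - 1 - j, by omega, by omega, ?_⟩
      simp only [hf]
      have hpz' : ((i - 1 - j : ℕ) : ℤ) = (i : ℤ) - 1 - j := by omega
      rw [hpz']
      norm_num
  have hLn : L + 1 ≤ n := by omega
  -- decompose the range
  have hrange : List.range L
      = List.range (p - 1) ++ [p - 1, p] ++ (List.range (L - (p + 1))).map ((p + 1) + ·) := by
    have h1 : L = (p + 1) + (L - (p + 1)) := by omega
    nth_rewrite 1 [h1]
    rw [List.range_add]
    congr 1
    have h2 : p + 1 = (p - 1) + 2 := by omega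
    rw [h2, List.range_add]
    congr 1
    show [(p-1) + 0, (p-1) + 1] = [p - 1, p]
    simp only [Nat.add_zero]
    rw [show p - 1 + 1 = p from by omega]
  have hword : CWord n i e = (List.range L).map f := by
    rw [CWord, if_neg (by omega : ¬ e < i)]
    show List.map _ ((List.range (i + n - e)) >>= fun a => pure (a : ℤ)) = _
    rw [show ((List.range (i + n - e)) >>= fun a => pure (a : ℤ))
          = (List.range (i + n - e)).map (fun a : ℕ => (a : ℤ)) from
        by simp; exact List.flatMap_pure_eq_map _ _,
      List.map_map]
    rfl
  -- key values
  have hfp1 : f (p - 1) = f p + 1 := by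
    simp only [hf]
    have h3 : ((p - 1 : ℕ) : ℤ) = (p : ℤ) - 1 := by omega
    rw [h3]
    push_cast
    ring
  have hA : ∀ t ∈ List.range (p - 1), T (f p) * T (f t) = T (f t) * T (f p) := by
    intro t ht
    rw [List.mem_range] at ht
    refine (comm_of_gap n T hcomm (f t) (f p) ((p : ℤ) - t) ?_ (by omega) (by omega)).symm
    simp only [hf]
    push_cast
    ring
  have hB : ∀ t ∈ List.range (L - (p + 1)),
      T (f p + 1) * T (f ((p + 1) + t)) = T (f ((p + 1) + t)) * T (f p + 1) := by
    intro t ht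
    rw [List.mem_range] at ht
    refine comm_of_gap n T hcomm (f p + 1) (f ((p+1) + t)) ((t : ℤ) + 2) ?_ (by omega) (by omega)
    simp only [hf]
    push_cast
    ring
  have hTj : T ((j : ℕ) : ZMod n) = T (f p) := by rw [hpz]
  have hTj1 : T ((j + 1 : ℕ) : ZMod n) = T (f p + 1) := by
    have h4 : ((j + 1 : ℕ) : ZMod n) = ((j : ℕ) : ZMod n) + 1 := by push_cast; ring
    rw [h4, ← hpz]
  rw [hTj, hTj1, CProd, hword, List.map_map, hrange]
  simp only [List.map_append, List.prod_append, List.map_map, List.map_cons, List.map_nil,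
    List.prod_cons, List.prod_nil, Function.comp]
  rw [hfp1]
  have hbr := hbraid (f p)
  have hA' : T (f p) * ((List.range (p-1)).map (fun t => T (f t))).prod
      = ((List.range (p-1)).map (fun t => T (f t))).prod * T (f p) := by
    apply mul_prod_comm
    intro a ha
    rw [List.mem_map] at ha
    obtain ⟨t, ht, rfl⟩ := ha
    exact hA t ht
  have hB' : T (f p + 1) * ((List.range (L-(p+1))).map (fun t => T (f ((p+1) + t)))).prod
      = ((List.range (L-(p+1))).map (fun t => T (f ((p+1) + t)))).prod * T (f p + 1) := by
    apply mul_prod_comm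
    intro a ha
    rw [List.mem_map] at ha
    obtain ⟨t, ht, rfl⟩ := ha
    exact hB t ht
  have hfin := slide_aux (T (f p)) (T (f p + 1))
    ((List.range (p-1)).map (fun t => T (f t))).prod
    ((List.range (L-(p+1))).map (fun t => T (f ((p+1) + t)))).prod
    hA' hB' hbr
  simpa [mul_assoc, Function.comp_def] using hfin
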